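/- Consider words over the alphabet {0, 1, $}. Define a one-step rewriting relation → by: u(0$1)w → u$w and u(1$0)w → u$w for any words u, w. Then for all x, y ∈ {0,1}*, the word x$y rewrites in finitely many steps to $ if and only if y equals the reversal of the bitwise complement of x (where the complement swaps 0 and 1). -/

import Mathlib

inductive Alpha2 : Type
  | zero : Alpha2
  | one : Alpha2
  | dollar : Alpha2

open Alpha2

/-- One-step rewriting with rules `0$1 → $` and `1$0 → $` at any position. -/
inductive Step2 : List Alpha2 → List Alpha2 → Prop
  | zo (u w : List Alpha2) :
      Step2 (u ++ [zero, dollar, one] ++ w) (u ++ [dollar] ++ w)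
  | oz (u w : List Alpha2) :
      Step2 (u ++ [one, dollar, zero] ++ w) (u ++ [dollar] ++ w)

/-- Embedding of the binary alphabet `{0,1}` (as `Bool`) into `{0,1,$}`. -/
def emb2 (b : Bool) : Alpha2 := if b then one else zero

deriving instance DecidableEq for Alpha2

lemma emb2_ne_dollar (b : Bool) : emb2 b ≠ dollar := by cases b <;> simp [emb2]

lemma dollar_not_mem_map (x : List Bool) : dollar ∉ x.map emb2 := by
  simp only [List.mem_map, not_exists]
  rintro b ⟨_, h⟩
  exact emb2_ne_dollar b h

lemma split_unique : ∀ (l1 : List Alpha2) (l2 r1 r2 : List Alpha2), dollar ∉ l1 → dollar ∉ l2 →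
    l1 ++ dollar :: r1 = l2 ++ dollar :: r2 → l1 = l2 ∧ r1 = r2 := by
  intro l1
  induction l1 with
  | nil =>
    intro l2 r1 r2 h1 h2 heq
    cases l2 with
    | nil => simpa using heq
    | cons a l2' =>
      simp only [List.nil_append, List.cons_append, List.cons.injEq] at heq
      exact absurd (heq.1 ▸ List.mem_cons_self (a := a) (l := l2')) h2
  | cons a l1' ih =>
    intro l2 r1 r2 h1 h2 heq
    cases l2 with
    | nil =>
      simp only [List.cons_append, List.nil_append, List.cons.injEq] at heq
      exact absurd (heq.1 ▸ List.mem_cons_self (a := a) (l := l1')) h1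
    | cons b l2' =>
      simp only [List.cons_append, List.cons.injEq] at heq
      obtain ⟨rfl, heq⟩ := heq
      have := ih l2' r1 r2 (fun h => h1 (List.mem_cons_of_mem _ h))
        (fun h => h2 (List.mem_cons_of_mem _ h)) heq
      exact ⟨by rw [this.1], this.2⟩

lemma count_aux {u w : List Alpha2} {c d : Alpha2} (hc : c ≠ dollar) (hd : d ≠ dollar)
    {x y : List Bool}
    (heq : u ++ [c, dollar, d] ++ w = x.map emb2 ++ [dollar] ++ y.map emb2) :
    dollar ∉ u ∧ dollar ∉ w := by
  have h := congrArg (List.count dollar) heq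
  simp [List.count_append, List.count_cons, hc.symm, hd.symm,
    List.count_eq_zero.2 (dollar_not_mem_map x),
    List.count_eq_zero.2 (dollar_not_mem_map y)] at h
  constructor <;> rw [← List.count_eq_zero] <;> omega

lemma map_eq_snoc {x : List Bool} {u : List Alpha2} {b : Bool}
    (h : x.map emb2 = u ++ [emb2 b]) : ∃ x', x = x' ++ [b] ∧ x'.map emb2 = u := by
  rw [List.map_eq_append_iff] at h
  obtain ⟨x', x2, rfl, h1, h2⟩ := h
  cases x2 with
  | nil => simp at h2
  | cons c t =>
    cases t with
    | nil =>
      simp only [List.map_cons, List.map_nil, List.cons.injEq] at h2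
      have : c = b := by cases c <;> cases b <;> simp_all [emb2]
      exact ⟨x', by rw [this], h1⟩
    | cons _ _ => simp at h2

lemma emb2_eq_iff {c b : Bool} : emb2 c = emb2 b ↔ c = b := by
  cases c <;> cases b <;> simp [emb2]

lemma step_inv {x y : List Bool} {s z : List Alpha2}
    (h : Step2 s z) (hs : s = x.map emb2 ++ [dollar] ++ y.map emb2) :
    ∃ (x' y' : List Bool) (b : Bool),
      x = x' ++ [b] ∧ y = (!b) :: y' ∧ z = x'.map emb2 ++ [dollar] ++ y'.map emb2 := by
  cases h with
  | zo u w =>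
    have heq := hs.symm
    have hmem := count_aux (c := zero) (d := one) (by simp) (by simp) heq.symm
    have heq2 : (u ++ [zero]) ++ dollar :: (one :: w)
        = x.map emb2 ++ dollar :: y.map emb2 := by simpa using heq.symm
    have hs := split_unique (u ++ [zero]) (x.map emb2) _ _
      (by simp [hmem.1]) (dollar_not_mem_map x) heq2
    obtain ⟨x', hx', hux⟩ := map_eq_snoc (b := false) (by simpa [emb2] using hs.1.symm)
    have hy : y.map emb2 = one :: w := hs.2.symm
    cases y with
    | nil => simp at hy
    | cons c y' =>
      simp only [List.map_cons, List.cons.injEq] at hy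
      have hc : c = true := by
        cases c
        · exact absurd hy.1 (by simp [emb2])
        · rfl
      exact ⟨x', y', false, hx', by simp [hc], by simp [hux, hy.2]⟩
  | oz u w =>
    have heq := hs.symm
    have hmem := count_aux (c := one) (d := zero) (by simp) (by simp) heq.symm
    have heq2 : (u ++ [one]) ++ dollar :: (zero :: w)
        = x.map emb2 ++ dollar :: y.map emb2 := by simpa using heq.symm
    have hs := split_unique (u ++ [one]) (x.map emb2) _ _
      (by simp [hmem.1]) (dollar_not_mem_map x) heq2
    obtain ⟨x', hx', hux⟩ := map_eq_snoc (b := true) (by simpa [emb2] using hs.1.symm)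
    have hy : y.map emb2 = zero :: w := hs.2.symm
    cases y with
    | nil => simp at hy
    | cons c y' =>
      simp only [List.map_cons, List.cons.injEq] at hy
      have hc : c = false := by
        cases c
        · rfl
        · exact absurd hy.1 (by simp [emb2])
      exact ⟨x', y', true, hx', by simp [hc], by simp [hux, hy.2]⟩

lemma forward : ∀ (x y : List Bool),
    Relation.ReflTransGen Step2 (x.map emb2 ++ [dollar] ++ y.map emb2) [dollar] →
    y = (x.map (fun b => !b)).reverse := by
  intro x
  induction x using List.reverseRecOn with
  | nil =>
    intro y h
    rcases h.cases_head with heq | ⟨c, hst, _⟩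
    · simp at heq; simpa using heq.symm
    · obtain ⟨x', _, b, hx', _, _⟩ := step_inv hst rfl
      exact absurd hx' (by simp)
  | append_singleton x' b ih =>
    intro y h
    rcases h.cases_head with heq | ⟨c, hst, hrest⟩
    · exfalso
      have := congrArg List.length heq
      simp at this
      omega
    · obtain ⟨x'', y', b', hx', hy', rfl⟩ := step_inv hst rfl
      obtain ⟨h1, h2⟩ := List.append_inj' hx' rfl
      have hb : b = b' := by simpa using h2
      subst h1 hb
      have := ih y' hrest
      simp [hy', this]

theorem stmt2 (x y : List Bool) :
    Relation.ReflTransGen Step2 (x.map emb2 ++ [dollar] ++ y.map emb2) [dollar] ↔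
      y = (x.map (fun b => !b)).reverse := by
  constructor
  · exact forward x y
  · rintro rfl
    induction x using List.reverseRecOn with
    | nil => simpa using Relation.ReflTransGen.refl
    | append_singleton x' b ih =>
      refine Relation.ReflTransGen.head ?_ ih
      have : x'.map emb2 ++ [emb2 b, dollar, emb2 !b] ++
          ((x'.map (fun b => !b)).reverse.map emb2)
          = (x' ++ [b]).map emb2 ++ [dollar] ++
            ((x' ++ [b]).map (fun b => !b)).reverse.map emb2 := by
        simp
      rw [← this]
      cases b
      · simpa [emb2] using Step2.zo (x'.map emb2) ((x'.map (fun b => !b)).reverse.map emb2)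
      · simpa [emb2] using Step2.oz (x'.map emb2) ((x'.map (fun b => !b)).reverse.map emb2)
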